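/- Let p be a prime, let S be a subset of 𝔽_p with |S| ≥ 2, and let φ : 𝔽_p^n → 𝔽_p be a mod-p form. Then for every y ∈ 𝔽_p, either ℙ_{x∈S^n}(φ(x) = y) = 0 or ℙ_{x∈S^n}(φ(x) = y) ≥ β(p,S), where β(p,S) = |S|^{−⌈(p−1)/(|S|−1)⌉}. -/

import Mathlib

open Finset

/-- The support of a mod-p form given by its coefficient vector. -/
def supp {p n : ℕ} (φ : Fin n → ZMod p) : Finset (Fin n) :=
  Finset.univ.filter fun i => φ i ≠ 0

/-- Evaluation of a mod-p form (given by coefficients) at a point. -/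
def evalForm {p n : ℕ} (φ x : Fin n → ZMod p) : ZMod p := ∑ i, φ i * x i

/-- The sumset a₁S + ⋯ + a_mS. -/
def sumsetSub {p m : ℕ} (a : Fin m → ZMod p) (S : Finset (ZMod p)) : Finset (ZMod p) :=
  (Fintype.piFinset fun _ : Fin m => S).image fun s => ∑ i, a i * s i

/-- L(S,E): smallest L such that for all nonzero a₁,…,a_L the sumset a₁S+⋯+a_LS ⊄ E. -/
noncomputable def LSE {p : ℕ} (S E : Finset (ZMod p)) : ℕ :=
  sInf {L : ℕ | ∀ a : Fin L → ZMod p, (∀ i, a i ≠ 0) → ¬ sumsetSub a S ⊆ E}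

/-- β(p,S) = |S|^{-⌈(p-1)/(|S|-1)⌉}. -/
noncomputable def betaPS (p : ℕ) (S : Finset (ZMod p)) : ℝ :=
  ((S.card : ℝ) ^ ⌈((p : ℝ) - 1) / ((S.card : ℝ) - 1)⌉₊)⁻¹

section aux

open Pointwise

lemma cd_ind {p n : ℕ} (hp : p.Prime) (S : Finset (ZMod p)) (hS : 2 ≤ S.card)
    (φ : Fin n → ZMod p) (T : Finset (Fin n)) (hT : ∀ i ∈ T, φ i ≠ 0) :
    min p (T.card * (S.card - 1) + 1) ≤
      ((Fintype.piFinset fun _ : Fin n => S).image fun x => ∑ i ∈ T, φ i * x i).card := by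
  haveI := Fact.mk hp
  have hSne : S.Nonempty := Finset.card_pos.mp (by omega)
  have hpi : (Fintype.piFinset fun _ : Fin n => S).Nonempty := by
    rw [Fintype.piFinset_nonempty]; intro _; exact hSne
  induction T using Finset.induction with
  | empty =>
    have : min p (0 * (S.card - 1) + 1) = 1 := by
      have := hp.two_le; omega
    rw [card_empty] at *
    rw [this]
    exact Finset.card_pos.mpr (hpi.image _)
  | @insert a T ha ih =>
    have ih' := ih (fun i hi => hT i (mem_insert_of_mem hi))
    have haz : φ a ≠ 0 := hT a (mem_insert_self a T)
    -- set A := scaled S, B := image over T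
    set B := ((Fintype.piFinset fun _ : Fin n => S).image fun x => ∑ i ∈ T, φ i * x i)
      with hBdef
    have hEq : ((Fintype.piFinset fun _ : Fin n => S).image
        fun x => ∑ i ∈ insert a T, φ i * x i) = (S.image fun t => φ a * t) + B := by
      ext c
      simp only [mem_image, mem_add, Fintype.mem_piFinset, hBdef]
      constructor
      · rintro ⟨x, hx, rfl⟩
        refine ⟨φ a * x a, ⟨x a, hx a, rfl⟩, ∑ i ∈ T, φ i * x i, ⟨x, hx, rfl⟩, ?_⟩
        rw [Finset.sum_insert ha]
      · rintro ⟨u, ⟨s, hs, rfl⟩, v, ⟨x, hx, rfl⟩, rfl⟩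
        refine ⟨Function.update x a s, fun i => ?_, ?_⟩
        · rcases eq_or_ne i a with rfl | hne
          · rw [Function.update_self]; exact hs
          · rw [Function.update_of_ne hne]; exact hx i
        · rw [Finset.sum_insert ha, Function.update_self]
          congr 1
          exact Finset.sum_congr rfl fun i hi => by
            rw [Function.update_of_ne (by rintro rfl; exact ha hi)]
    rw [hEq]
    have hAcard : (S.image fun t => φ a * t).card = S.card :=
      Finset.card_image_of_injective _ (mul_right_injective₀ haz)
    have hAne : (S.image fun t => φ a * t).Nonempty := hSne.image _
    have hBne : B.Nonempty := hpi.image _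
    have hCD := ZMod.cauchy_davenport hp hAne hBne
    rw [hAcard] at hCD
    have hmul : (insert a T).card * (S.card - 1) = T.card * (S.card - 1) + (S.card - 1) := by
      rw [Finset.card_insert_of_notMem ha, add_mul, one_mul]
    omega

lemma sum_surj {p n : ℕ} (hp : p.Prime) (S : Finset (ZMod p)) (hS : 2 ≤ S.card)
    (φ : Fin n → ZMod p) (T : Finset (Fin n)) (hT : ∀ i ∈ T, φ i ≠ 0)
    (hcard : p ≤ T.card * (S.card - 1) + 1) (c : ZMod p) :
    ∃ x : Fin n → ZMod p, (∀ i, x i ∈ S) ∧ ∑ i ∈ T, φ i * x i = c := by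
  haveI := Fact.mk hp
  have h := cd_ind hp S hS φ T hT
  rw [min_eq_left hcard] at h
  have hcZ : Fintype.card (ZMod p) = p := ZMod.card p
  have himg : ((Fintype.piFinset fun _ : Fin n => S).image
      fun x => ∑ i ∈ T, φ i * x i) = univ := by
    apply Finset.eq_univ_of_card
    have := Finset.card_le_univ ((Fintype.piFinset fun _ : Fin n => S).image
      fun x => ∑ i ∈ T, φ i * x i)
    rw [hcZ] at this ⊢; exact le_antisymm this h
  have : c ∈ ((Fintype.piFinset fun _ : Fin n => S).image
      fun x => ∑ i ∈ T, φ i * x i) := himg ▸ mem_univ c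
  obtain ⟨x, hx, hxc⟩ := mem_image.mp this
  exact ⟨x, fun i => (Fintype.mem_piFinset.mp hx) i, hxc⟩

end aux

theorem stmt_6 {p n : ℕ} (hp : p.Prime) (S : Finset (ZMod p)) (hS : 2 ≤ S.card)
    (φ : Fin n → ZMod p) (y : ZMod p) :
    (((Fintype.piFinset fun _ : Fin n => S).filter
        fun x => evalForm φ x = y).card : ℝ) / (S.card : ℝ) ^ n = 0 ∨
    betaPS p S ≤ (((Fintype.piFinset fun _ : Fin n => S).filter
        fun x => evalForm φ x = y).card : ℝ) / (S.card : ℝ) ^ n := by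
  classical
  by_cases h0 : ((Fintype.piFinset fun _ : Fin n => S).filter fun x => evalForm φ x = y).card = 0
  · left; rw [h0]; norm_num
  · right
    set m := ⌈((p : ℝ) - 1) / ((S.card : ℝ) - 1)⌉₊ with hmdef
    set k := (supp φ).card with hkdef
    set j := min m k with hjdef
    obtain ⟨T, hTsub, hTcard⟩ := Finset.exists_subset_card_eq (s := supp φ) (n := j) (min_le_right m k)
    have hTk : ∀ i ∈ T, φ i ≠ 0 := fun i hi => (Finset.mem_filter.mp (hTsub hi)).2
    have hkn : k ≤ n := by simpa using Finset.card_le_univ (supp φ)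
    have hjn : j ≤ n := le_trans (min_le_right m k) hkn
    have key : ∀ z : Fin n → ZMod p, (∀ i, z i ∈ S) →
        ∃ x : Fin n → ZMod p, (∀ i, x i ∈ S) ∧ evalForm φ x = y ∧ ∀ i ∉ T, x i = z i := by
      intro z hz
      rcases le_or_gt m k with hmk | hkm
      · have hTm : T.card = m := by rw [hTcard, hjdef]; omega
        have hceil : ((p:ℝ) - 1) / ((S.card:ℝ) - 1) ≤ (m:ℝ) := Nat.le_ceil _
        have hs1 : (0:ℝ) < (S.card:ℝ) - 1 := by
          have : (2:ℝ) ≤ (S.card:ℝ) := by exact_mod_cast hS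
          linarith
        have hr : (p:ℝ) - 1 ≤ (m:ℝ) * ((S.card:ℝ) - 1) := by
          rw [div_le_iff₀ hs1] at hceil; linarith
        have hpm : p ≤ m * (S.card - 1) + 1 := by
          have h1 : (p:ℝ) ≤ (m:ℝ) * ((S.card:ℝ) - 1) + 1 := by linarith
          have h2 : ((S.card:ℝ) - 1) = ((S.card - 1 : ℕ) : ℝ) := by
            have h3 : 1 ≤ S.card := by omega
            push_cast [h3]; ring
          rw [h2] at h1
          exact_mod_cast h1
        obtain ⟨v, hvS, hv⟩ := sum_surj hp S hS φ T hTk (by rw [hTm]; exact hpm)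
          (y - ∑ i ∈ univ \ T, φ i * z i)
        refine ⟨fun i => if i ∈ T then v i else z i, fun i => ?_, ?_, fun i hi => if_neg hi⟩
        · by_cases hi : i ∈ T <;> simp [hi, hvS i, hz i]
        · rw [evalForm, ← Finset.sum_sdiff (Finset.subset_univ T)]
          have h1 : ∑ i ∈ univ \ T, φ i * (if i ∈ T then v i else z i)
              = ∑ i ∈ univ \ T, φ i * z i :=
            Finset.sum_congr rfl fun i hi => by rw [if_neg (Finset.mem_sdiff.mp hi).2]
          have h2 : ∑ i ∈ T, φ i * (if i ∈ T then v i else z i) = ∑ i ∈ T, φ i * v i :=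
            Finset.sum_congr rfl fun i hi => by rw [if_pos hi]
          rw [h1, h2, hv]; ring
      · have hTsupp : T = supp φ := Finset.eq_of_subset_of_card_le hTsub (by rw [hTcard]; omega)
        obtain ⟨w, hw⟩ := Finset.card_pos.mp (Nat.pos_of_ne_zero h0)
        rw [Finset.mem_filter, Fintype.mem_piFinset] at hw
        obtain ⟨hwS, hwy⟩ := hw
        have hzero : ∀ i ∈ univ \ T, φ i = 0 := by
          intro i hi
          have h4 := (Finset.mem_sdiff.mp hi).2
          rw [hTsupp, supp, Finset.mem_filter] at h4
          push_neg at h4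
          exact h4 (mem_univ i)
        refine ⟨fun i => if i ∈ T then w i else z i, fun i => ?_, ?_, fun i hi => if_neg hi⟩
        · by_cases hi : i ∈ T <;> simp [hi, hwS i, hz i]
        · rw [evalForm, ← Finset.sum_sdiff (Finset.subset_univ T)]
          have h1 : ∑ i ∈ univ \ T, φ i * (if i ∈ T then w i else z i) = 0 :=
            Finset.sum_eq_zero fun i hi => by rw [hzero i hi, zero_mul]
          have h2 : ∑ i ∈ T, φ i * (if i ∈ T then w i else z i) = ∑ i ∈ T, φ i * w i :=
            Finset.sum_congr rfl fun i hi => by rw [if_pos hi]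
          have h4 : ∑ i ∈ univ \ T, φ i * w i = 0 :=
            Finset.sum_eq_zero fun i hi => by rw [hzero i hi, zero_mul]
          have h3 : ∑ i ∈ T, φ i * w i = evalForm φ w := by
            rw [evalForm, ← Finset.sum_sdiff (Finset.subset_univ T), h4, zero_add]
          rw [h1, h2, h3, hwy, zero_add]
    obtain ⟨s₀, hs₀⟩ := Finset.card_pos.mp (by omega : 0 < S.card)
    have hsurj : Set.SurjOn (fun (x : Fin n → ZMod p) i => if i ∈ T then (0:ZMod p) else x i)
        ↑((Fintype.piFinset fun _ : Fin n => S).filter fun x => evalForm φ x = y)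
        ↑(Fintype.piFinset fun i : Fin n => if i ∈ T then ({0} : Finset (ZMod p)) else S) := by
      intro z hz
      rw [Finset.mem_coe, Fintype.mem_piFinset] at hz
      obtain ⟨x, hxS, hxy, hxz⟩ := key (fun i => if i ∈ T then s₀ else z i) (fun i => by
        by_cases hi : i ∈ T
        · simpa [hi] using hs₀
        · have := hz i; simpa [hi] using this)
      refine ⟨x, ?_, ?_⟩
      · rw [Finset.mem_coe, Finset.mem_filter, Fintype.mem_piFinset]
        exact ⟨fun i => hxS i, hxy⟩
      · funext i
        by_cases hi : i ∈ T
        · have := hz i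
          rw [if_pos hi, Finset.mem_singleton] at this
          simp [hi, this]
        · have := hxz i hi
          simp only [hi, if_neg, ite_false]
          rw [this, if_neg hi]
    have hcount := Finset.card_le_card_of_surjOn _ hsurj
    have htcard : (Fintype.piFinset fun i : Fin n =>
        if i ∈ T then ({0}:Finset (ZMod p)) else S).card = S.card ^ (n - j) := by
      rw [Fintype.card_piFinset, ← Finset.prod_sdiff (Finset.subset_univ T)]
      have h1 : ∏ i ∈ T, (if i ∈ T then ({0}:Finset (ZMod p)) else S).card = 1 :=
        Finset.prod_eq_one fun i hi => by rw [if_pos hi, Finset.card_singleton]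
      have h2 : ∏ i ∈ univ \ T, (if i ∈ T then ({0}:Finset (ZMod p)) else S).card
          = S.card ^ (n - j) := by
        rw [Finset.prod_congr rfl (fun i hi => by
          rw [if_neg (Finset.mem_sdiff.mp hi).2]), Finset.prod_const]
        congr 1
        rw [Finset.card_sdiff_of_subset (Finset.subset_univ T), Finset.card_univ, Fintype.card_fin, hTcard]
      rw [h1, h2, mul_one]
    rw [htcard] at hcount
    have hspos : (0:ℝ) < (S.card:ℝ) := by positivity
    have hs1R : (1:ℝ) ≤ (S.card:ℝ) := by exact_mod_cast (by omega : 1 ≤ S.card)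
    have hc : (S.card:ℝ) ^ (n - j) ≤
        (((Fintype.piFinset fun _ : Fin n => S).filter fun x => evalForm φ x = y).card : ℝ) := by
      exact_mod_cast hcount
    rw [betaPS, ← hmdef, le_div_iff₀ (pow_pos hspos n)]
    calc ((S.card:ℝ)^m)⁻¹ * (S.card:ℝ)^n ≤ (S.card:ℝ)^(n-j) := by
          rw [inv_mul_le_iff₀ (pow_pos hspos m), ← pow_add]
          exact pow_le_pow_right₀ hs1R (by omega)
      _ ≤ _ := hc
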